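/- For every real d with (47 − 5√57)/24 ≤ d < 1 there exists n₀ such that for all n ≥ n₀ the following holds: if ℱ is a family of 3-element subsets of an n-element vertex set X with δ(ℱ) ≥ d·C(n,2), then |∂ℱ| ≥ (1/2 + √((4d − 1)/12))·C(n,2). -/

import Mathlib

set_option maxHeartbeats 1000000 in
private lemma sqrt_facts (d : ℝ) (hd1 : (47 - 5 * Real.sqrt 57) / 24 ≤ d) (hd2 : d < 1) :
    ∃ u : ℝ, u ^ 2 = d ∧ 0 ≤ u ∧ u ≤ 1 ∧ 1 / 2 ≤ u ∧
      (∀ e : ℝ, e ^ 2 = (4 * d - 1) / 12 → 0 ≤ e → e ≤ 4 * u - 2 * u ^ 2 - 3 / 2) := by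
  have hw2 : (Real.sqrt 57) ^ 2 = 57 := Real.sq_sqrt (by norm_num)
  have hw0 : 0 ≤ Real.sqrt 57 := Real.sqrt_nonneg _
  set w := Real.sqrt 57 with hwdef
  have hw7 : 7 ≤ w := by nlinarith
  have hw8 : w ≤ 8 := by nlinarith
  have hd0 : 0 ≤ d := by linarith
  have hu2 : (Real.sqrt d) ^ 2 = d := Real.sq_sqrt hd0
  have hu0 : 0 ≤ Real.sqrt d := Real.sqrt_nonneg _
  set u := Real.sqrt d with hudef
  have hu_lo : (15 - w) / 12 ≤ u := by nlinarith
  have hu1 : u ≤ 1 := by nlinarith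
  have hu_half : 1 / 2 ≤ u := by linarith
  refine ⟨u, hu2, hu0, hu1, hu_half, fun e he he0 => ?_⟩
  have hR0 : 0 ≤ 4 * u - 2 * u ^ 2 - 3 / 2 := by
    nlinarith [mul_nonneg (by linarith : (0:ℝ) ≤ 2 * u - 1) (by linarith : (0:ℝ) ≤ 3 - 2 * u)]
  have h67 : 6 * u ^ 2 - 15 * u + 7 ≤ 0 := by
    nlinarith [mul_nonneg (by linarith : (0:ℝ) ≤ u - (15 - w) / 12)
      (by nlinarith : (0:ℝ) ≤ (15 + w) / 12 - u)]
  nlinarith [mul_nonneg (mul_nonneg (by linarith : (0:ℝ) ≤ 1 - u)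
    (by linarith : (0:ℝ) ≤ 2 * u - 1)) (by linarith : (0:ℝ) ≤ -(6 * u ^ 2 - 15 * u + 7)),
    sq_nonneg (4 * u - 2 * u ^ 2 - 3 / 2 - e), sq_nonneg (4 * u - 2 * u ^ 2 - 3 / 2 + e)]

set_option maxHeartbeats 4000000 in
private lemma numeric_main (d e n δ m : ℝ)
    (hd1 : (47 - 5 * Real.sqrt 57) / 24 ≤ d) (hd2 : d < 1)
    (he : e ^ 2 = (4 * d - 1) / 12) (he0 : 0 ≤ e)
    (hn2 : 2 ≤ n) (hn0 : 6 / (1 - d) ≤ n)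
    (hδ0 : 0 ≤ δ)
    (hA : d * (n * (n - 1)) ≤ δ * (δ - 1))
    (hcount : δ + d * (n * (n - 1)) / 2 + (n - 1 - δ) * δ
        ≤ m + (n - 1 - δ) * (n - 2 - δ) / 2)
    (hhs : n * δ ≤ 2 * m) :
    (1 / 2 + e) * (n * (n - 1) / 2) ≤ m := by
  obtain ⟨u, hu2, hu0, hu1, hu_half, hkey⟩ := sqrt_facts d hd1 hd2
  have key : e ≤ 4 * u - 2 * u ^ 2 - 3 / 2 := hkey e he he0
  have hd14 : 1 / 4 ≤ d := by nlinarith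
  rcases le_or_gt ((1 / 2 + e) * (n - 1)) δ with hcase | hcase
  · linarith [mul_le_mul_of_nonneg_left hcase (by linarith : (0:ℝ) ≤ n)]
  · clear hhs
    have hnn : 2 ≤ n * (n - 1) := by nlinarith
    have hDl : 1 / 2 ≤ d * (n * (n - 1)) := by nlinarith
    have hδ1 : 1 ≤ δ := by
      by_contra hcc
      push_neg at hcc
      linarith [mul_nonneg hδ0 (by linarith : (0:ℝ) ≤ 1 - δ), hA, hDl]
    obtain ⟨r, hr0, hr2⟩ : ∃ r : ℝ, 0 ≤ r ∧ r ^ 2 = 1 + 4 * (d * (n * (n - 1))) :=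
      ⟨Real.sqrt (1 + 4 * (d * (n * (n - 1)))), Real.sqrt_nonneg _,
        Real.sq_sqrt (by linarith)⟩
    have hr1 : 1 ≤ r := by nlinarith [hr2, hr0, hDl]
    have hδδ₀ : (1 + r) / 2 ≤ δ := by
      by_contra hcc
      push_neg at hcc
      linarith [hr2, hA, mul_pos (by linarith : (0:ℝ) < (1 + r) / 2 - δ)
        (by linarith : (0:ℝ) < (1 + r) / 2 + δ - 1)]
    have hX : 2 * (n - 1) * (n * (d + 3 / 4 + e / 2) - 1) - (2 * n - 3) ≤ (2 * n - 3) * r := by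
      rcases le_or_gt (2 * (n - 1) * (n * (d + 3 / 4 + e / 2) - 1) - (2 * n - 3)) 0 with h | h
      · have : 0 ≤ (2 * n - 3) * r := mul_nonneg (by linarith) hr0
        linarith
      · have hK : d + 3 / 4 + e / 2 ≤ 2 * u := by linarith [key, hu2]
        have hX2u : 2 * (n - 1) * (n * (d + 3 / 4 + e / 2) - 1) - (2 * n - 3)
            ≤ 4 * u * n ^ 2 - 4 * u * n - 4 * n + 5 := by
          linarith [mul_nonneg (mul_nonneg (by linarith : (0:ℝ) ≤ 2 * n)
            (by linarith : (0:ℝ) ≤ n - 1)) (by linarith : (0:ℝ) ≤ 2 * u - (d + 3 / 4 + e / 2))]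
        have h6 : 6 ≤ (1 - d) * n := by
          rw [div_le_iff₀ (by linarith : (0:ℝ) < 1 - d)] at hn0
          linarith [hn0]
        have h6u : 6 ≤ (1 - u ^ 2) * n := by rw [hu2]; exact h6
        have h3 : 3 ≤ (1 - u) * n := by
          linarith [h6u, mul_nonneg (by linarith : (0:ℝ) ≤ n) (sq_nonneg (1 - u))]
        have c2 : (-32 : ℝ) ≤ 68 * u ^ 2 - 72 * u - 12 := by linarith [sq_nonneg (17 * u - 9)]
        have c3 : (0:ℝ) ≤ -36 * u ^ 2 + 40 * u + 28 := by
          linarith [mul_nonneg hu0 (by linarith : (0:ℝ) ≤ 1 - u)]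
        have t1 : (3:ℝ) * (1 / 2) ≤ ((1 - u) * n) * u :=
          mul_le_mul h3 hu_half (by norm_num) (by linarith)
        have e1 : (48:ℝ) * n ^ 2 ≤ 32 * ((((1 - u) * n) * u) * n ^ 2) := by
          linarith [mul_le_mul_of_nonneg_right t1 (by positivity : (0:ℝ) ≤ n ^ 2)]
        have e2 : (-32:ℝ) * n ^ 2 ≤ (68 * u ^ 2 - 72 * u - 12) * n ^ 2 :=
          mul_le_mul_of_nonneg_right c2 (by positivity)
        have e3 : (0:ℝ) ≤ (-36 * u ^ 2 + 40 * u + 28) * n :=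
          mul_nonneg c3 (by linarith)
        have e4 : (4:ℝ) ≤ n ^ 2 := by linarith [sq_nonneg (n - 2)]
        have hid2 : (2 * n - 3) ^ 2 * (1 + 4 * u ^ 2 * (n * (n - 1)))
              - (4 * u * n ^ 2 - 4 * u * n - 4 * n + 5) ^ 2
            = 32 * ((((1 - u) * n) * u) * n ^ 2) + (68 * u ^ 2 - 72 * u - 12) * n ^ 2
              + (-36 * u ^ 2 + 40 * u + 28) * n - 16 := by ring
        have hP : (4 * u * n ^ 2 - 4 * u * n - 4 * n + 5) ^ 2
            ≤ (2 * n - 3) ^ 2 * (1 + 4 * u ^ 2 * (n * (n - 1))) := by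
          linarith [e1, e2, e3, e4, hid2]
        have hrpos : 0 ≤ (2 * n - 3) * r := mul_nonneg (by linarith) hr0
        have hP2 : (2 * (n - 1) * (n * (d + 3 / 4 + e / 2) - 1) - (2 * n - 3)) ^ 2
            ≤ ((2 * n - 3) * r) ^ 2 := by
          calc (2 * (n - 1) * (n * (d + 3 / 4 + e / 2) - 1) - (2 * n - 3)) ^ 2
              ≤ (4 * u * n ^ 2 - 4 * u * n - 4 * n + 5) ^ 2 := by
                apply pow_le_pow_left₀ h.le hX2u
            _ ≤ (2 * n - 3) ^ 2 * (1 + 4 * u ^ 2 * (n * (n - 1))) := hP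
            _ = ((2 * n - 3) * r) ^ 2 := by rw [mul_pow, hr2, hu2]; ring
        exact le_of_pow_le_pow_left₀ two_ne_zero hrpos hP2
    have heq : -(d * (n * (n - 1))) + (n - 1) * (n * (d + 3 / 4 + e / 2) - 1)
        - (n - 1) * (n - 2) / 2 - (1 / 2 + e) * (n * (n - 1) / 2) = 0 := by ring
    have hQδ₀ : 0 ≤ d * (n * (n - 1)) / 2 - 3 / 2 * ((1 + r) / 2) ^ 2
        + (2 * n - 3 / 2) * ((1 + r) / 2)
        - (n - 1) * (n - 2) / 2 - (1 / 2 + e) * (n * (n - 1) / 2) := by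
      linarith [hX, hr2, heq]
    have hQb : 0 ≤ d * (n * (n - 1)) / 2 - 3 / 2 * ((1 / 2 + e) * (n - 1)) ^ 2
        + (2 * n - 3 / 2) * ((1 / 2 + e) * (n - 1))
        - (n - 1) * (n - 2) / 2 - (1 / 2 + e) * (n * (n - 1) / 2) := by
      have hde : d = 3 * e ^ 2 + 1 / 4 := by linarith
      have hq : d * (n * (n - 1)) / 2 - 3 / 2 * ((1 / 2 + e) * (n - 1)) ^ 2
          + (2 * n - 3 / 2) * ((1 / 2 + e) * (n - 1))
          - (n - 1) * (n - 2) / 2 - (1 / 2 + e) * (n * (n - 1) / 2)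
          = (n - 1) * (3 * e ^ 2 + 5 / 4) / 2 := by rw [hde]; ring
      rw [hq]
      have h5 : (0:ℝ) ≤ 3 * e ^ 2 + 5 / 4 := by positivity
      nlinarith
    have hδ₀b : (1 + r) / 2 < (1 / 2 + e) * (n - 1) := lt_of_le_of_lt hδδ₀ hcase
    have hQδ : 0 ≤ d * (n * (n - 1)) / 2 - 3 / 2 * δ ^ 2 + (2 * n - 3 / 2) * δ
        - (n - 1) * (n - 2) / 2 - (1 / 2 + e) * (n * (n - 1) / 2) := by
      obtain ⟨M, hMdef⟩ : ∃ M : ℝ, (1 / 2 + e) * (n * (n - 1) / 2) = M := ⟨_, rfl⟩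
      obtain ⟨b, hbdef⟩ : ∃ b : ℝ, (1 / 2 + e) * (n - 1) = b := ⟨_, rfl⟩
      obtain ⟨c, hcdef⟩ : ∃ c : ℝ, (1 + r) / 2 = c := ⟨_, rfl⟩
      obtain ⟨E, hEdef⟩ : ∃ E : ℝ, d * (n * (n - 1)) = E := ⟨_, rfl⟩
      rw [hMdef, hEdef]
      rw [hMdef, hEdef] at hQδ₀ hQb
      rw [hbdef] at hQb hδ₀b hcase
      rw [hcdef] at hQδ₀ hδ₀b hδδ₀
      have hid : (b - c) * (E / 2 - 3 / 2 * δ ^ 2 + (2 * n - 3 / 2) * δ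
            - (n - 1) * (n - 2) / 2 - M)
          = (b - δ) * (E / 2 - 3 / 2 * c ^ 2 + (2 * n - 3 / 2) * c
            - (n - 1) * (n - 2) / 2 - M)
          + (δ - c) * (E / 2 - 3 / 2 * b ^ 2 + (2 * n - 3 / 2) * b
            - (n - 1) * (n - 2) / 2 - M)
          + 3 / 2 * (δ - c) * (b - δ) * (b - c) := by ring
      by_contra hcon
      push_neg at hcon
      linarith [hid, mul_nonneg (by linarith : (0:ℝ) ≤ b - δ) hQδ₀,
        mul_nonneg (by linarith : (0:ℝ) ≤ δ - c) hQb,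
        mul_nonneg (mul_nonneg (by linarith : (0:ℝ) ≤ δ - c)
          (by linarith : (0:ℝ) ≤ b - δ)) (by linarith : (0:ℝ) ≤ b - c),
        mul_pos (by linarith : (0:ℝ) < b - c)
          (by linarith : (0:ℝ) < -(E / 2 - 3 / 2 * δ ^ 2 + (2 * n - 3 / 2) * δ
            - (n - 1) * (n - 2) / 2 - M))]
    linarith [hQδ, hcount]


-- helper: a family of 2-sets contained in C has at most C(|C|,2) members
private lemma card_filter_subset_le {V : Type} [DecidableEq V]
    (𝒮 : Finset (Finset V)) (h2 : ∀ S ∈ 𝒮, S.card = 2) (C : Finset V) :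
    (𝒮.filter (fun S => S ⊆ C)).card ≤ C.card.choose 2 := by
  rw [← Finset.card_powersetCard 2 C]
  apply Finset.card_le_card
  intro S hS
  rw [Finset.mem_filter] at hS
  exact Finset.mem_powersetCard.mpr ⟨hS.2, h2 S hS.1⟩

-- helper: double counting
private lemma sum_deg_eq {V : Type} [DecidableEq V] [Fintype V]
    (𝒮 : Finset (Finset V)) (C : Finset V) :
    ∑ x ∈ C, (𝒮.filter (fun S => x ∈ S)).card = ∑ S ∈ 𝒮, (S ∩ C).card := by
  simp_rw [Finset.card_filter]
  rw [Finset.sum_comm]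
  apply Finset.sum_congr rfl
  intro S _
  rw [← Finset.card_filter]
  congr 1
  rw [Finset.inter_comm, ← Finset.filter_mem_eq_inter]

theorem shadow_min_degree_large_d (d : ℝ)
    (hd1 : (47 - 5 * Real.sqrt 57) / 24 ≤ d) (hd2 : d < 1) :
    ∃ n₀ : ℕ, ∀ n : ℕ, n₀ ≤ n →
      ∀ (V : Type) [Fintype V] [DecidableEq V], Fintype.card V = n →
      ∀ ℱ : Finset (Finset V), (∀ F ∈ ℱ, F.card = 3) →
      (∀ x : V, d * ((n : ℝ) * ((n : ℝ) - 1) / 2)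
          ≤ (((ℱ.filter (fun F => x ∈ F)).card : ℝ))) →
      (1 / 2 + Real.sqrt ((4 * d - 1) / 12)) * ((n : ℝ) * ((n : ℝ) - 1) / 2)
        ≤ ((Finset.shadow ℱ).card : ℝ) := by
  have hw2 : (Real.sqrt 57) ^ 2 = 57 := Real.sq_sqrt (by norm_num)
  have hw0 : 0 ≤ Real.sqrt 57 := Real.sqrt_nonneg _
  have hw8 : Real.sqrt 57 ≤ 8 := by nlinarith
  have hd14 : (1:ℝ)/4 ≤ d := by linarith
  have hd1d : (0:ℝ) < 1 - d := by linarith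
  refine ⟨max 2 ⌈6 / (1 - d)⌉₊, fun n hn V _ _ hcardV ℱ h3 hdeg => ?_⟩
  have hn2 : 2 ≤ n := le_trans (le_max_left _ _) hn
  have hn2r : (2:ℝ) ≤ n := by exact_mod_cast hn2
  have hn6 : 6 / (1 - d) ≤ (n:ℝ) := by
    calc 6/(1-d) ≤ (⌈6/(1-d)⌉₊ : ℝ) := Nat.le_ceil _
    _ ≤ n := by exact_mod_cast le_trans (le_max_right _ _) hn
  classical
  have hS2 : ∀ S ∈ ℱ.shadow, S.card = 2 := by
    intro S hS
    rw [Finset.mem_shadow_iff] at hS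
    obtain ⟨t, ht, a, ha, rfl⟩ := hS
    rw [Finset.card_erase_of_mem ha, h3 t ht]
  have hVne : Nonempty V := by
    rw [← Fintype.card_pos_iff, hcardV]; omega
  obtain ⟨v, -, hv⟩ := Finset.exists_min_image Finset.univ
    (fun x => (ℱ.shadow.filter (fun S => x ∈ S)).card)
    ⟨Classical.arbitrary V, Finset.mem_univ _⟩
  set N : Finset V := (ℱ.shadow.filter (fun S => v ∈ S)).biUnion (fun S => S.erase v)
    with hNdef
  -- structure of 2-sets containing v
  have hpair : ∀ S ∈ ℱ.shadow, v ∈ S → ∀ u ∈ S.erase v, S = insert v {u} := by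
    intro S hS hvS u hu
    have hc : (S.erase v).card = 1 := by
      rw [Finset.card_erase_of_mem hvS, hS2 S hS]
    obtain ⟨a, ha⟩ := Finset.card_eq_one.mp hc
    rw [ha] at hu
    rw [Finset.mem_singleton] at hu
    subst hu
    rw [← ha, Finset.insert_erase hvS]
  have hvN : v ∉ N := by
    rw [hNdef]
    intro hvmem
    rw [Finset.mem_biUnion] at hvmem
    obtain ⟨S, _, hve⟩ := hvmem
    exact (Finset.notMem_erase v S) hve
  have hNcard : N.card = (ℱ.shadow.filter (fun S => v ∈ S)).card := by
    rw [hNdef, Finset.card_biUnion]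
    · have h1 : ∀ S ∈ ℱ.shadow.filter (fun S => v ∈ S), (S.erase v).card = 1 := by
        intro S hS
        rw [Finset.mem_filter] at hS
        rw [Finset.card_erase_of_mem hS.2, hS2 S hS.1]
      rw [Finset.sum_congr rfl h1, Finset.sum_const, smul_eq_mul, mul_one]
    · intro S1 h1 S2 h2 hne
      rw [Finset.mem_coe, Finset.mem_filter] at h1 h2
      rw [Function.onFun, Finset.disjoint_left]
      intro u hu1 hu2
      exact hne ((hpair S1 h1.1 h1.2 u hu1).trans (hpair S2 h2.1 h2.2 u hu2).symm)
  set B : Finset V := Finset.univ \ insert v N with hBdef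
  have hinsN : (insert v N).card = N.card + 1 := Finset.card_insert_of_notMem hvN
  have hinsle : N.card + 1 ≤ n := by
    rw [← hinsN, ← hcardV, ← Finset.card_univ]
    exact Finset.card_le_card (Finset.subset_univ _)
  have hBcard : B.card + (N.card + 1) = n := by
    rw [hBdef, Finset.card_sdiff_of_subset (Finset.subset_univ _), Finset.card_univ, hcardV, hinsN]
    omega
  -- the three disjoint subfamilies of the shadow
  have d12 : Disjoint (ℱ.shadow.filter (fun S => v ∈ S))
      (ℱ.shadow.filter (fun S => S ⊆ N)) := by
    rw [Finset.disjoint_left]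
    intro S h1 h2
    rw [Finset.mem_filter] at h1 h2
    exact hvN (h2.2 h1.2)
  have huN : ∀ S ∈ ℱ.shadow, v ∈ S → ∀ u ∈ S, u ≠ v → u ∈ N := by
    intro S hS hvS u huS hune
    rw [hNdef, Finset.mem_biUnion]
    exact ⟨S, Finset.mem_filter.mpr ⟨hS, hvS⟩, Finset.mem_erase.mpr ⟨hune, huS⟩⟩
  have d13 : Disjoint (ℱ.shadow.filter (fun S => v ∈ S))
      (ℱ.shadow.filter (fun S => (S ∩ B).Nonempty)) := by
    rw [Finset.disjoint_left]
    intro S h1 h2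
    rw [Finset.mem_filter] at h1 h2
    obtain ⟨u, hu⟩ := h2.2
    rw [Finset.mem_inter] at hu
    have huB := hu.2
    rw [hBdef, Finset.mem_sdiff] at huB
    apply huB.2
    by_cases hcc : u = v
    · rw [hcc]; exact Finset.mem_insert_self _ _
    · exact Finset.mem_insert_of_mem (huN S h1.1 h1.2 u hu.1 hcc)
  have d23 : Disjoint (ℱ.shadow.filter (fun S => S ⊆ N))
      (ℱ.shadow.filter (fun S => (S ∩ B).Nonempty)) := by
    rw [Finset.disjoint_left]
    intro S h1 h2
    rw [Finset.mem_filter] at h1 h2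
    obtain ⟨u, hu⟩ := h2.2
    rw [Finset.mem_inter] at hu
    have huB := hu.2
    rw [hBdef, Finset.mem_sdiff] at huB
    exact huB.2 (Finset.mem_insert_of_mem (h1.2 hu.1))
  have hsplit : (ℱ.shadow.filter (fun S => v ∈ S)).card
      + (ℱ.shadow.filter (fun S => S ⊆ N)).card
      + (ℱ.shadow.filter (fun S => (S ∩ B).Nonempty)).card ≤ ℱ.shadow.card := by
    rw [← Finset.card_union_of_disjoint d12,
      ← Finset.card_union_of_disjoint (Finset.disjoint_union_left.mpr ⟨d13, d23⟩)]
    apply Finset.card_le_card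
    apply Finset.union_subset (Finset.union_subset (Finset.filter_subset _ _)
      (Finset.filter_subset _ _)) (Finset.filter_subset _ _)
  -- the link of v injects into 2-sets inside N
  have hlink : (ℱ.filter (fun F => v ∈ F)).card
      ≤ (ℱ.shadow.filter (fun S => S ⊆ N)).card := by
    apply Finset.card_le_card_of_injOn (fun F => F.erase v)
    · intro F hF
      rw [Finset.mem_coe, Finset.mem_filter] at hF
      obtain ⟨hFℱ, hvF⟩ := hF
      rw [Finset.mem_coe, Finset.mem_filter]
      constructor
      · exact Finset.erase_mem_shadow hFℱ hvF
      · intro u hu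
        rw [Finset.mem_erase] at hu
        obtain ⟨hune, huF⟩ := hu
        have hsub : ({v, u} : Finset V) ⊆ F := by
          intro x hx
          rcases Finset.mem_insert.mp hx with h | h
          · rw [h]; exact hvF
          · rw [Finset.mem_singleton.mp h]; exact huF
        have hcards : ({v, u} : Finset V).card = 2 := by
          rw [Finset.card_insert_of_notMem (by simpa using (Ne.symm hune)),
            Finset.card_singleton]
        have hsd : (F \ {v, u}).Nonempty := by
          rw [← Finset.card_pos, Finset.card_sdiff_of_subset hsub, hcards, h3 F hFℱ]
          norm_num
        obtain ⟨w, hw⟩ := hsd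
        rw [Finset.mem_sdiff] at hw
        obtain ⟨hwF, hwvu⟩ := hw
        have hwv : w ≠ v := by
          rintro rfl
          exact hwvu (Finset.mem_insert_self _ _)
        have hwu : w ≠ u := by
          rintro rfl
          exact hwvu (Finset.mem_insert_of_mem (Finset.mem_singleton_self _))
        apply huN (F.erase w) (Finset.erase_mem_shadow hFℱ hwF)
          (Finset.mem_erase.mpr ⟨Ne.symm hwv, hvF⟩) u
          (Finset.mem_erase.mpr ⟨Ne.symm hwu, huF⟩) hune
    · intro F1 h1 F2 h2 heq
      simp only [Finset.coe_filter, Set.mem_setOf_eq] at h1 h2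
      have heq' : F1.erase v = F2.erase v := heq
      rw [← Finset.insert_erase h1.2, heq', Finset.insert_erase h2.2]
  have hchoose : (ℱ.shadow.filter (fun S => S ⊆ N)).card ≤ N.card.choose 2 :=
    card_filter_subset_le _ hS2 N
  -- counting edges meeting B
  have hP3 : B.card * N.card
      ≤ (ℱ.shadow.filter (fun S => (S ∩ B).Nonempty)).card + B.card.choose 2 := by
    have hmin : B.card * N.card ≤ ∑ b ∈ B, (ℱ.shadow.filter (fun S => b ∈ S)).card := by
      rw [hNcard]
      have := Finset.card_nsmul_le_sum B (fun b => (ℱ.shadow.filter (fun S => b ∈ S)).card)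
        _ (fun b _ => hv b (Finset.mem_univ b))
      simpa [smul_eq_mul] using this
    rw [sum_deg_eq] at hmin
    have hle : ∑ S ∈ ℱ.shadow, (S ∩ B).card
        ≤ (ℱ.shadow.filter (fun S => (S ∩ B).Nonempty)).card + B.card.choose 2 := by
      rw [← Finset.sum_filter_add_sum_filter_not ℱ.shadow (fun S => (S ∩ B).Nonempty)]
      have hzero : ∑ S ∈ ℱ.shadow.filter (fun S => ¬(S ∩ B).Nonempty), (S ∩ B).card = 0 := by
        apply Finset.sum_eq_zero
        intro S hS
        rw [Finset.mem_filter] at hS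
        rw [Finset.not_nonempty_iff_eq_empty.mp hS.2, Finset.card_empty]
      rw [hzero, add_zero]
      calc ∑ S ∈ ℱ.shadow.filter (fun S => (S ∩ B).Nonempty), (S ∩ B).card
          ≤ ∑ S ∈ ℱ.shadow.filter (fun S => (S ∩ B).Nonempty),
              (1 + if S ⊆ B then 1 else 0) := by
            apply Finset.sum_le_sum
            intro S hS
            rw [Finset.mem_filter] at hS
            by_cases hSB : S ⊆ B
            · rw [if_pos hSB]
              calc (S ∩ B).card ≤ S.card := Finset.card_le_card Finset.inter_subset_left
                _ = 2 := hS2 S hS.1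
            · rw [if_neg hSB]
              by_contra hcc
              push_neg at hcc
              have h2le : S.card ≤ (S ∩ B).card := by
                rw [hS2 S hS.1]; omega
              have := Finset.eq_of_subset_of_card_le Finset.inter_subset_left h2le
              exact hSB (fun x hx => by
                have : x ∈ S ∩ B := by rw [this]; exact hx
                exact (Finset.mem_inter.mp this).2)
        _ = (ℱ.shadow.filter (fun S => (S ∩ B).Nonempty)).card
            + (((ℱ.shadow.filter (fun S => (S ∩ B).Nonempty)).filter
                (fun S => S ⊆ B))).card := by
            rw [Finset.sum_add_distrib, Finset.sum_const, smul_eq_mul, mul_one,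
              ← Finset.card_filter]
        _ ≤ (ℱ.shadow.filter (fun S => (S ∩ B).Nonempty)).card + B.card.choose 2 := by
            apply Nat.add_le_add_left
            calc (((ℱ.shadow.filter (fun S => (S ∩ B).Nonempty)).filter
                (fun S => S ⊆ B))).card
                ≤ (ℱ.shadow.filter (fun S => S ⊆ B)).card := by
                  apply Finset.card_le_card
                  intro S hS
                  rw [Finset.mem_filter] at hS ⊢
                  rw [Finset.mem_filter] at hS
                  exact ⟨hS.1.1, hS.2⟩
              _ ≤ B.card.choose 2 := card_filter_subset_le _ hS2 B
    exact le_trans hmin hle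
  -- handshake
  have hhsℕ : n * N.card ≤ 2 * ℱ.shadow.card := by
    have h1 : n * N.card ≤ ∑ x ∈ Finset.univ, (ℱ.shadow.filter (fun S => x ∈ S)).card := by
      rw [hNcard]
      have := Finset.card_nsmul_le_sum Finset.univ
        (fun b => (ℱ.shadow.filter (fun S => b ∈ S)).card)
        _ (fun b _ => hv b (Finset.mem_univ b))
      simpa [smul_eq_mul, Finset.card_univ, hcardV] using this
    have h2 : ∑ x ∈ Finset.univ, (ℱ.shadow.filter (fun S => x ∈ S)).card
        = 2 * ℱ.shadow.card := by
      rw [sum_deg_eq]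
      calc ∑ S ∈ ℱ.shadow, (S ∩ Finset.univ).card
          = ∑ S ∈ ℱ.shadow, 2 := Finset.sum_congr rfl (fun S hS => by
            rw [Finset.inter_univ]; exact hS2 S hS)
        _ = 2 * ℱ.shadow.card := by rw [Finset.sum_const, smul_eq_mul, mul_comm]
    omega
  -- pass to the reals
  set e := Real.sqrt ((4 * d - 1) / 12) with hedef
  have he : e ^ 2 = (4 * d - 1) / 12 := Real.sq_sqrt (by linarith)
  have he0 : 0 ≤ e := Real.sqrt_nonneg _
  set δr : ℝ := (N.card : ℝ) with hδrdef
  set sr : ℝ := (B.card : ℝ) with hsrdef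
  have hδr0 : 0 ≤ δr := Nat.cast_nonneg _
  have hsreq : sr = (n : ℝ) - 1 - δr := by
    rw [hsrdef, hδrdef]
    have := hBcard
    push_cast [← this]
    ring
  have hA : d * ((n:ℝ) * ((n:ℝ) - 1)) ≤ δr * (δr - 1) := by
    have h1 : d * ((n:ℝ) * ((n:ℝ) - 1) / 2) ≤ ((N.card.choose 2 : ℕ) : ℝ) := by
      calc d * ((n:ℝ) * ((n:ℝ) - 1) / 2)
          ≤ ((ℱ.filter (fun F => v ∈ F)).card : ℝ) := hdeg v
        _ ≤ ((N.card.choose 2 : ℕ) : ℝ) := by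
            exact_mod_cast le_trans hlink hchoose
    rw [Nat.cast_choose_two] at h1
    rw [hδrdef]
    linarith
  have hcount : δr + d * ((n:ℝ) * ((n:ℝ) - 1)) / 2 + ((n:ℝ) - 1 - δr) * δr
      ≤ (ℱ.shadow.card : ℝ) + ((n:ℝ) - 1 - δr) * ((n:ℝ) - 2 - δr) / 2 := by
    have hsplit' : (δr : ℝ) + ((ℱ.shadow.filter (fun S => S ⊆ N)).card : ℝ)
        + ((ℱ.shadow.filter (fun S => (S ∩ B).Nonempty)).card : ℝ)
        ≤ (ℱ.shadow.card : ℝ) := by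
      rw [← hNcard] at hsplit
      rw [hδrdef]
      exact_mod_cast hsplit
    have hP2r : d * ((n:ℝ) * ((n:ℝ) - 1)) / 2
        ≤ ((ℱ.shadow.filter (fun S => S ⊆ N)).card : ℝ) := by
      have := hdeg v
      have h2 : ((ℱ.filter (fun F => v ∈ F)).card : ℝ)
          ≤ ((ℱ.shadow.filter (fun S => S ⊆ N)).card : ℝ) := by exact_mod_cast hlink
      linarith
    have hP3r : sr * δr
        ≤ ((ℱ.shadow.filter (fun S => (S ∩ B).Nonempty)).card : ℝ)
          + sr * (sr - 1) / 2 := by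
      have h1 : (((B.card * N.card : ℕ)) : ℝ)
          ≤ (((ℱ.shadow.filter (fun S => (S ∩ B).Nonempty)).card + B.card.choose 2 : ℕ) : ℝ) := by
        exact_mod_cast hP3
      push_cast [Nat.cast_choose_two] at h1
      rw [hsrdef, hδrdef]
      linarith
    have hsr2 : sr * (sr - 1) / 2 = ((n:ℝ) - 1 - δr) * ((n:ℝ) - 2 - δr) / 2 := by
      rw [hsreq]; ring
    rw [← hsr2]
    rw [hsreq] at hP3r
    linarith
  have hhs : (n:ℝ) * δr ≤ 2 * (ℱ.shadow.card : ℝ) := by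
    rw [hδrdef]
    exact_mod_cast hhsℕ
  exact numeric_main d e n δr (ℱ.shadow.card : ℝ) hd1 hd2 he he0 hn2r hn6 hδr0 hA hcount hhs
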